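/- As d → ∞, p_c(d) := ((d·e^{d+1}/(d+1)^d)·Γ(d,d+1))^{−1} satisfies p_c(d) ~ sqrt(2/(πd)), i.e., lim_{d→∞} p_c(d)·sqrt(πd/2) = 1. -/

import Mathlib

open Finset Real Filter

/-- Incomplete gamma function at natural arguments. -/
noncomputable def incGamma (m : ℕ) (x : ℝ) : ℝ :=
  (Nat.factorial (m - 1) : ℝ) * Real.exp (-x) *
    ∑ i ∈ Finset.range m, x ^ i / (Nat.factorial i : ℝ)

/-- Critical spreading probability on the Cayley tree of coordination number `d+1`. -/
noncomputable def pCrit (d : ℕ) : ℝ :=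
  ((d : ℝ) * Real.exp ((d : ℝ) + 1) / ((d : ℝ) + 1) ^ d * incGamma d ((d : ℝ) + 1))⁻¹

open MeasureTheory Set Topology

namespace PCritAux

/-- The rescaled integrand. -/
noncomputable def Jf (d : ℕ) (u : ℝ) : ℝ :=
  (1 + u / Real.sqrt d) ^ (d - 1) * Real.exp (-(((d : ℝ) + 1) / Real.sqrt d * u))

/-- The rescaled integral. -/
noncomputable def Jint (d : ℕ) : ℝ := ∫ u in Ioi (0 : ℝ), Jf d u

lemma sqrt_tendsto_atTop : Tendsto Real.sqrt atTop atTop := by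
  refine tendsto_atTop_atTop.2 fun b => ⟨b ^ 2, fun a ha => ?_⟩
  calc b ≤ |b| := le_abs_self b
    _ = Real.sqrt (b ^ 2) := (Real.sqrt_sq_eq_abs b).symm
    _ ≤ Real.sqrt a := Real.sqrt_le_sqrt ha

lemma two_log_le {y : ℝ} (hy : 1 ≤ y) : 2 * Real.log y ≤ y - y⁻¹ := by
  have h0 : (0 : ℝ) < y := lt_of_lt_of_le one_pos hy
  have h2 : Real.log y ≤ Real.sinh (Real.log y) :=
    Real.self_le_sinh_iff.2 (Real.log_nonneg hy)
  rw [Real.sinh_eq, Real.exp_log h0, Real.exp_neg, Real.exp_log h0] at h2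
  linarith

lemma log_le {x : ℝ} (hx : 0 ≤ x) : Real.log (1 + x) ≤ x - x ^ 2 / (2 * (1 + x)) := by
  have h0 : (0 : ℝ) < 1 + x := by linarith
  have h := two_log_le (by linarith : (1 : ℝ) ≤ 1 + x)
  have he : x - x ^ 2 / (2 * (1 + x)) = ((1 + x) - (1 + x)⁻¹) / 2 := by
    field_simp
    ring
  rw [he]; linarith

lemma exponent_le {D : ℝ} (hD : 2 ≤ D) {u : ℝ} (hu : 0 ≤ u) :
    (D - 1) * Real.log (1 + u / Real.sqrt D) - (D + 1) * (u / Real.sqrt D) ≤ (1 - u) / 8 := by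
  have hD0 : (0 : ℝ) ≤ D := by linarith
  have hs1 : 1 ≤ Real.sqrt D := Real.one_le_sqrt.2 (by linarith)
  have hs : 0 < Real.sqrt D := lt_of_lt_of_le one_pos hs1
  set x := u / Real.sqrt D with hxdef
  have hx0 : 0 ≤ x := div_nonneg hu hs.le
  have hxu : x ≤ u := by rw [hxdef]; exact div_le_self hu hs1
  have hux : u ^ 2 = x ^ 2 * D := by
    rw [hxdef, div_pow, Real.sq_sqrt hD0, div_mul_cancel₀]
    exact (by linarith : (0 : ℝ) < D).ne'
  have hlog := log_le hx0
  have h1x : (0 : ℝ) < 1 + x := by linarith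
  have h1u : (0 : ℝ) < 1 + u := by linarith
  have hQ : (D - 1) * Real.log (1 + x) ≤
      (D - 1) * x - (D - 1) * (x ^ 2 / (2 * (1 + x))) := by
    have h := mul_le_mul_of_nonneg_left hlog (show (0 : ℝ) ≤ D - 1 by linarith)
    nlinarith [h]
  have step2 : u ^ 2 / (4 * (1 + u)) ≤ (D - 1) * (x ^ 2 / (2 * (1 + x))) := by
    rw [show (D - 1) * (x ^ 2 / (2 * (1 + x))) = ((D - 1) * x ^ 2) / (2 * (1 + x)) from
      (mul_div_assoc _ _ _).symm]
    rw [div_le_div_iff₀ (by positivity) (by positivity)]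
    have h6 : 2 * D * (1 + x) ≤ 4 * (D - 1) * (1 + u) := by nlinarith
    calc u ^ 2 * (2 * (1 + x)) = x ^ 2 * (2 * D * (1 + x)) := by rw [hux]; ring
      _ ≤ x ^ 2 * (4 * (D - 1) * (1 + u)) := mul_le_mul_of_nonneg_left h6 (sq_nonneg x)
      _ = (D - 1) * x ^ 2 * (4 * (1 + u)) := by ring
  have step3 : -(u ^ 2 / (4 * (1 + u))) ≤ (1 - u) / 8 := by
    have he : (1 - u) / 8 + u ^ 2 / (4 * (1 + u)) = (1 + u ^ 2) / (8 * (1 + u)) := by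
      field_simp
      ring
    have hpos : (0 : ℝ) ≤ (1 + u ^ 2) / (8 * (1 + u)) := by positivity
    linarith
  linarith

lemma jf_eq_exp {D : ℝ} (hD : 0 < D) (n : ℕ) {u : ℝ} (hu : 0 ≤ u) :
    (1 + u / Real.sqrt D) ^ n * Real.exp (-((D + 1) / Real.sqrt D * u)) =
      Real.exp ((n : ℝ) * Real.log (1 + u / Real.sqrt D) - (D + 1) * (u / Real.sqrt D)) := by
  have hs : 0 < Real.sqrt D := Real.sqrt_pos.2 hD
  have hx : (0 : ℝ) < 1 + u / Real.sqrt D := by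
    have : 0 ≤ u / Real.sqrt D := div_nonneg hu hs.le
    linarith
  conv_lhs => rw [← Real.exp_log hx]
  rw [← Real.exp_nat_mul, ← Real.exp_add]
  congr 1
  ring

lemma nat_tendsto : Tendsto (fun d : ℕ => Real.sqrt ((d : ℝ) + 2)) atTop atTop :=
  sqrt_tendsto_atTop.comp (tendsto_atTop_add_const_right _ 2 tendsto_natCast_atTop_atTop)

lemma tendsto_exponent {u : ℝ} (hu : 0 ≤ u) :
    Tendsto (fun d : ℕ =>
      (((d : ℝ) + 2) - 1) * Real.log (1 + u / Real.sqrt ((d : ℝ) + 2)) -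
        (((d : ℝ) + 2) + 1) * (u / Real.sqrt ((d : ℝ) + 2))) atTop (𝓝 (-(u ^ 2 / 2))) := by
  set s : ℕ → ℝ := fun d => Real.sqrt ((d : ℝ) + 2) with hsdef
  have hspos : ∀ d, 0 < s d := fun d => Real.sqrt_pos.2 (by positivity)
  have hs2 : ∀ d, s d ^ 2 = (d : ℝ) + 2 := fun d => Real.sq_sqrt (by positivity)
  set x : ℕ → ℝ := fun d => u / s d with hxdef
  have hx0 : ∀ d, 0 ≤ x d := fun d => div_nonneg hu (hspos d).le
  have hsinv : Tendsto (fun d : ℕ => (s d)⁻¹) atTop (𝓝 0) := nat_tendsto.inv_tendsto_atTop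
  have hx : Tendsto x atTop (𝓝 0) := by
    have := hsinv.const_mul u
    simpa [hxdef, div_eq_mul_inv, mul_zero] using this
  have hlog : Tendsto (fun d => Real.log (1 + x d)) atTop (𝓝 0) := by
    have h1 : Tendsto (fun d => 1 + x d) atTop (𝓝 1) := by
      simpa using (tendsto_const_nhds (x := (1 : ℝ))).add hx
    have := h1.log (one_ne_zero)
    simpa using this
  have hx3 : ∀ d : ℕ, ((d : ℝ) + 2) * x d ^ 3 = u ^ 2 * x d := by
    intro d
    have : x d ^ 3 = x d ^ 2 * x d := by ring
    rw [this, hxdef]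
    have hx2 : (u / s d) ^ 2 = u ^ 2 / ((d : ℝ) + 2) := by
      rw [div_pow, hs2 d]
    rw [hx2]
    field_simp
  have hDR : Tendsto (fun d : ℕ =>
      ((d : ℝ) + 2) * (Real.log (1 + x d) - x d + x d ^ 2 / 2)) atTop (𝓝 0) := by
    apply squeeze_zero_norm' (a := fun d => 2 * u ^ 2 * x d)
    · filter_upwards [hx.eventually_lt_const (show (0 : ℝ) < 1 / 2 by norm_num)] with d hd
      have hxd := hx0 d
      have habs : |(-(x d))| < 1 := by rw [abs_neg, abs_of_nonneg hxd]; linarith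
      have h := Real.abs_log_sub_add_sum_range_le habs 2
      have hsum : (∑ i ∈ Finset.range 2, (-(x d)) ^ (i + 1) / ((i : ℝ) + 1)) =
          -(x d) + x d ^ 2 / 2 := by
        rw [Finset.sum_range_succ, Finset.sum_range_one]
        norm_num
      rw [hsum] at h
      have h1 : (1 : ℝ) - (x d) ≥ 1 / 2 := by linarith
      have habs2 : |(-(x d))| = x d := by rw [abs_neg, abs_of_nonneg hxd]
      rw [habs2] at h
      have hb : x d ^ 3 / (1 - x d) ≤ 2 * x d ^ 3 := by
        rw [div_le_iff₀ (by linarith)]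
        nlinarith [pow_nonneg hxd 3]
      have key : |Real.log (1 + x d) - x d + x d ^ 2 / 2| ≤ 2 * x d ^ 3 := by
        have : (1 : ℝ) - -(x d) = 1 + x d := by ring
        rw [this] at h
        calc |Real.log (1 + x d) - x d + x d ^ 2 / 2|
            = |(-(x d) + x d ^ 2 / 2) + Real.log (1 + x d)| := by ring_nf
          _ ≤ x d ^ 3 / (1 - x d) := h
          _ ≤ 2 * x d ^ 3 := hb
      have hnorm : ‖((d : ℝ) + 2) * (Real.log (1 + x d) - x d + x d ^ 2 / 2)‖ =
          ((d : ℝ) + 2) * |Real.log (1 + x d) - x d + x d ^ 2 / 2| := by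
        rw [Real.norm_eq_abs, abs_mul, abs_of_nonneg (by positivity : (0 : ℝ) ≤ (d : ℝ) + 2)]
      rw [hnorm]
      calc ((d : ℝ) + 2) * |Real.log (1 + x d) - x d + x d ^ 2 / 2|
          ≤ ((d : ℝ) + 2) * (2 * x d ^ 3) :=
            mul_le_mul_of_nonneg_left key (by positivity)
        _ = 2 * (((d : ℝ) + 2) * x d ^ 3) := by ring
        _ = 2 * (u ^ 2 * x d) := by rw [hx3 d]
        _ = 2 * u ^ 2 * x d := by ring
    · have := hx.const_mul (2 * u ^ 2)
      simpa using this
  have hiden : ∀ d : ℕ,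
      (((d : ℝ) + 2) - 1) * Real.log (1 + x d) - (((d : ℝ) + 2) + 1) * x d =
        ((d : ℝ) + 2) * (Real.log (1 + x d) - x d + x d ^ 2 / 2) - Real.log (1 + x d)
          - x d - u ^ 2 / 2 := by
    intro d
    have hxx : ((d : ℝ) + 2) * x d ^ 2 = u ^ 2 := by
      rw [hxdef]
      have : (u / s d) ^ 2 = u ^ 2 / ((d : ℝ) + 2) := by rw [div_pow, hs2 d]
      rw [this]
      field_simp
    nlinarith [hxx]
  have hfinal : Tendsto (fun d : ℕ =>
      ((d : ℝ) + 2) * (Real.log (1 + x d) - x d + x d ^ 2 / 2) - Real.log (1 + x d)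
        - x d - u ^ 2 / 2) atTop (𝓝 (-(u ^ 2 / 2))) := by
    have h := ((hDR.sub hlog).sub hx).sub_const (u ^ 2 / 2)
    simpa using h
  exact hfinal.congr (fun d => (hiden d).symm)

lemma jf_tendsto {u : ℝ} (hu : 0 ≤ u) :
    Tendsto (fun d : ℕ => Jf (d + 2) u) atTop (𝓝 (Real.exp (-(u ^ 2 / 2)))) := by
  have hcast : ∀ d : ℕ, ((d + 2 : ℕ) : ℝ) = (d : ℝ) + 2 := by intro d; push_cast; ring
  have heq : ∀ d : ℕ, Jf (d + 2) u =
      Real.exp ((((d : ℝ) + 2) - 1) * Real.log (1 + u / Real.sqrt ((d : ℝ) + 2)) -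
        (((d : ℝ) + 2) + 1) * (u / Real.sqrt ((d : ℝ) + 2))) := by
    intro d
    unfold Jf
    rw [hcast d]
    have h := jf_eq_exp (D := (d : ℝ) + 2) (by positivity) (d + 2 - 1) hu
    rw [h]
    congr 2
    push_cast
    ring
  have := (Real.continuous_exp.tendsto _).comp (tendsto_exponent hu)
  exact this.congr (fun d => (heq d).symm)

lemma jf_le_bound (d : ℕ) {u : ℝ} (hu : 0 ≤ u) :
    Jf (d + 2) u ≤ Real.exp ((1 - u) / 8) := by
  have hcast : ((d + 2 : ℕ) : ℝ) = (d : ℝ) + 2 := by push_cast; ring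
  have hD : (2 : ℝ) ≤ (d : ℝ) + 2 := by have := Nat.cast_nonneg (α := ℝ) d; linarith
  unfold Jf
  rw [hcast]
  rw [jf_eq_exp (D := (d : ℝ) + 2) (by positivity) (d + 2 - 1) hu]
  apply Real.exp_le_exp.2
  have hcast2 : ((d + 2 - 1 : ℕ) : ℝ) = ((d : ℝ) + 2) - 1 := by push_cast; ring
  rw [hcast2]
  exact exponent_le hD hu

lemma jf_nonneg (d : ℕ) {u : ℝ} (hu : 0 ≤ u) : 0 ≤ Jf d u := by
  unfold Jf
  have h : (0 : ℝ) ≤ 1 + u / Real.sqrt d := by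
    have : 0 ≤ u / Real.sqrt d := div_nonneg hu (Real.sqrt_nonneg _)
    linarith
  exact mul_nonneg (pow_nonneg h _) (Real.exp_nonneg _)

lemma jf_continuous (d : ℕ) : Continuous (Jf d) := by
  unfold Jf
  exact ((continuous_const.add (continuous_id.div_const _)).pow _).mul
    (Real.continuous_exp.comp (continuous_const.mul continuous_id).neg)

lemma sqrt_pi_half : ∫ u in Ioi (0 : ℝ), Real.exp (-(u ^ 2 / 2)) = Real.sqrt (π / 2) := by
  have hfun : (fun u : ℝ => Real.exp (-(u ^ 2 / 2))) =
      fun u : ℝ => Real.exp (-(1 / 2 : ℝ) * u ^ 2) := by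
    funext u
    congr 1
    ring
  rw [hfun, integral_gaussian_Ioi (1 / 2)]
  rw [show π / (1 / 2 : ℝ) = (π / 2) * 4 by ring, Real.sqrt_mul (by positivity),
    show Real.sqrt 4 = 2 by
      rw [show (4 : ℝ) = 2 ^ 2 by norm_num, Real.sqrt_sq (by norm_num : (0 : ℝ) ≤ 2)]]
  ring

lemma Jint_tendsto : Tendsto Jint atTop (𝓝 (Real.sqrt (π / 2))) := by
  rw [← tendsto_add_atTop_iff_nat 2]
  have hDCT : Tendsto (fun n : ℕ => ∫ u in Ioi (0 : ℝ), Jf (n + 2) u) atTop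
      (𝓝 (∫ u in Ioi (0 : ℝ), Real.exp (-(u ^ 2 / 2)))) := by
    apply MeasureTheory.tendsto_integral_of_dominated_convergence
      (bound := fun u => Real.exp ((1 - u) / 8))
    · intro n
      exact ((jf_continuous (n + 2)).aestronglyMeasurable).restrict
    · have : IntegrableOn (fun u : ℝ => Real.exp ((1 - u) / 8)) (Ioi 0) := by
        have h8 : (0 : ℝ) < 1 / 8 := by norm_num
        have hi := exp_neg_integrableOn_Ioi 0 h8
        have heq : ∀ u : ℝ, Real.exp ((1 - u) / 8) =
            Real.exp (1 / 8) * Real.exp (-(1 / 8) * u) := by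
          intro u
          rw [← Real.exp_add]
          congr 1
          ring
        exact (hi.const_mul (Real.exp (1 / 8))).congr
          (Filter.Eventually.of_forall fun u => (heq u).symm)
      exact this
    · intro n
      rw [ae_restrict_iff' measurableSet_Ioi]
      filter_upwards with u hu
      rw [Real.norm_eq_abs, abs_of_nonneg (jf_nonneg (n + 2) (le_of_lt hu))]
      exact jf_le_bound n (le_of_lt hu)
    · rw [ae_restrict_iff' measurableSet_Ioi]
      filter_upwards with u hu
      exact jf_tendsto (le_of_lt hu)
  rw [← sqrt_pi_half]
  exact hDCT

lemma incGamma_eq_integral (d : ℕ) (hd : 1 ≤ d) {a : ℝ} (ha : 0 ≤ a) :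
    ∫ t in Ioi a, t ^ (d - 1) * Real.exp (-t) = incGamma d a := by
  obtain ⟨e, rfl⟩ : ∃ e, d = e + 1 := ⟨d - 1, (Nat.succ_pred_eq_of_pos hd).symm⟩
  have hfe : ((e.factorial : ℝ)) ≠ 0 := Nat.cast_ne_zero.2 e.factorial_ne_zero
  set P : ℝ → ℝ := fun t => ∑ i ∈ Finset.range (e + 1), t ^ i / (Nat.factorial i : ℝ) with hP
  set f : ℝ → ℝ := fun t => -((e.factorial : ℝ) * (Real.exp (-t) * P t)) with hf
  have hderiv : ∀ t ∈ Ici a, HasDerivAt f (t ^ e * Real.exp (-t)) t := by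
    intro t _
    have hPd : HasDerivAt P (∑ i ∈ Finset.range (e + 1),
        (i : ℝ) * t ^ (i - 1) / (Nat.factorial i : ℝ)) t :=
      HasDerivAt.fun_sum fun i _ => (hasDerivAt_pow i t).div_const _
    have hP' : (∑ i ∈ Finset.range (e + 1), (i : ℝ) * t ^ (i - 1) / (Nat.factorial i : ℝ)) =
        ∑ i ∈ Finset.range e, t ^ i / (Nat.factorial i : ℝ) := by
      rw [Finset.sum_range_succ']
      simp only [Nat.cast_zero, zero_mul, Nat.factorial_zero, Nat.cast_one, zero_div, add_zero]
      apply Finset.sum_congr rfl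
      intro i _
      have h1 : (i + 1) - 1 = i := by omega
      rw [h1, Nat.factorial_succ]
      push_cast
      exact mul_div_mul_left _ _ (by positivity : ((i : ℝ) + 1) ≠ 0)
    rw [hP'] at hPd
    have hexp : HasDerivAt (fun t : ℝ => Real.exp (-t)) (-Real.exp (-t)) t := by
      simpa using (hasDerivAt_neg t).exp
    have hmul := (hexp.mul hPd).const_mul ((e.factorial : ℝ))
    have := hmul.fun_neg
    refine this.congr_deriv ?_
    have hPsplit : P t = (∑ i ∈ Finset.range e, t ^ i / (Nat.factorial i : ℝ)) +
        t ^ e / (e.factorial : ℝ) := Finset.sum_range_succ _ _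
    rw [hPsplit]
    field_simp
    ring
  have htend : Tendsto f atTop (𝓝 0) := by
    have hterm : ∀ i : ℕ, Tendsto (fun t : ℝ => t ^ i * Real.exp (-t) / (Nat.factorial i : ℝ))
        atTop (𝓝 0) := by
      intro i
      have := (tendsto_pow_mul_exp_neg_atTop_nhds_zero i).div_const ((Nat.factorial i : ℝ))
      simpa using this
    have hsum : Tendsto (fun t : ℝ => ∑ i ∈ Finset.range (e + 1),
        t ^ i * Real.exp (-t) / (Nat.factorial i : ℝ)) atTop (𝓝 0) := by
      have := tendsto_finset_sum (Finset.range (e + 1)) (fun i _ => hterm i)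
      simpa using this
    have heq : ∀ t : ℝ, f t = -((e.factorial : ℝ) * ∑ i ∈ Finset.range (e + 1),
        t ^ i * Real.exp (-t) / (Nat.factorial i : ℝ)) := by
      intro t
      simp only [hf, hP, neg_inj, Finset.mul_sum]
      apply Finset.sum_congr rfl
      intro i _
      ring
    have := (hsum.const_mul ((e.factorial : ℝ))).neg
    rw [mul_zero, neg_zero] at this
    exact this.congr (fun t => (heq t).symm)
  have hnonneg : ∀ t ∈ Ioi a, 0 ≤ t ^ e * Real.exp (-t) := by
    intro t ht
    have : (0 : ℝ) ≤ t := le_trans ha (le_of_lt ht)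
    positivity
  have key := integral_Ioi_of_hasDerivAt_of_nonneg' hderiv hnonneg htend
  have h1 : (e + 1) - 1 = e := by omega
  rw [h1]
  rw [key]
  rw [hf]
  unfold incGamma
  rw [h1]
  simp only [zero_sub, neg_neg]
  rw [hP]
  ring

lemma integral_shift (f : ℝ → ℝ) (a : ℝ) :
    ∫ x in Ioi a, f x = ∫ u in Ioi (0 : ℝ), f (a + u) := by
  have h := (measurePreserving_add_left (volume : Measure ℝ) a).setIntegral_preimage_emb
    (MeasurableEquiv.addLeft a).measurableEmbedding f (Ioi a)
  rw [← h]
  have hpre : (fun x : ℝ => a + x) ⁻¹' Set.Ioi a = Set.Ioi (0 : ℝ) := by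
    rw [Set.preimage_const_add_Ioi, sub_self]
  rw [show ((a + ·) : ℝ → ℝ) ⁻¹' Set.Ioi a = Set.Ioi (0 : ℝ) from hpre]

lemma key_identity (d : ℕ) (hd : 1 ≤ d) :
    (d : ℝ) * Real.exp ((d : ℝ) + 1) / ((d : ℝ) + 1) ^ d * incGamma d ((d : ℝ) + 1) =
      Real.sqrt d * Jint d := by
  have hd0 : (0 : ℝ) < d := by exact_mod_cast hd
  have hs : 0 < Real.sqrt d := Real.sqrt_pos.2 hd0
  have hs2 : Real.sqrt d ^ 2 = (d : ℝ) := Real.sq_sqrt hd0.le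
  have hd1 : (0 : ℝ) < (d : ℝ) + 1 := by linarith
  set c : ℝ := ((d : ℝ) + 1) / Real.sqrt d with hc
  have hcpos : 0 < c := div_pos hd1 hs
  -- Step 1: incGamma as an integral
  have h1 : incGamma d ((d : ℝ) + 1) =
      ∫ t in Ioi ((d : ℝ) + 1), t ^ (d - 1) * Real.exp (-t) :=
    (incGamma_eq_integral d hd hd1.le).symm
  -- Step 2: shift
  have h2 : ∫ t in Ioi ((d : ℝ) + 1), t ^ (d - 1) * Real.exp (-t) =
      ∫ u in Ioi (0 : ℝ), ((d : ℝ) + 1 + u) ^ (d - 1) * Real.exp (-((d : ℝ) + 1 + u)) :=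
    integral_shift (fun t => t ^ (d - 1) * Real.exp (-t)) ((d : ℝ) + 1)
  -- Step 3: scale
  have h3 : ∫ u in Ioi (0 : ℝ), ((d : ℝ) + 1 + u) ^ (d - 1) * Real.exp (-((d : ℝ) + 1 + u)) =
      c * ∫ s in Ioi (0 : ℝ),
        ((d : ℝ) + 1 + c * s) ^ (d - 1) * Real.exp (-((d : ℝ) + 1 + c * s)) := by
    have h := MeasureTheory.integral_comp_mul_left_Ioi
      (fun u => ((d : ℝ) + 1 + u) ^ (d - 1) * Real.exp (-((d : ℝ) + 1 + u))) 0 hcpos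
    rw [mul_zero] at h
    rw [h, smul_eq_mul, ← mul_assoc, mul_inv_cancel₀ hcpos.ne', one_mul]
  -- Step 4: rewrite integrand
  have h4 : ∀ s : ℝ,
      ((d : ℝ) + 1 + c * s) ^ (d - 1) * Real.exp (-((d : ℝ) + 1 + c * s)) =
        (((d : ℝ) + 1) ^ (d - 1) * Real.exp (-((d : ℝ) + 1))) * Jf d s := by
    intro s
    unfold Jf
    have harg : (d : ℝ) + 1 + c * s = ((d : ℝ) + 1) * (1 + s / Real.sqrt d) := by
      rw [hc]
      field_simp
    rw [harg, mul_pow]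
    have hexp : Real.exp (-(((d : ℝ) + 1) * (1 + s / Real.sqrt d))) =
        Real.exp (-((d : ℝ) + 1)) * Real.exp (-(((d : ℝ) + 1) / Real.sqrt d * s)) := by
      rw [← Real.exp_add]
      congr 1
      field_simp
      ring
    rw [hexp]
    ring
  have h5 : ∫ s in Ioi (0 : ℝ),
      ((d : ℝ) + 1 + c * s) ^ (d - 1) * Real.exp (-((d : ℝ) + 1 + c * s)) =
        (((d : ℝ) + 1) ^ (d - 1) * Real.exp (-((d : ℝ) + 1))) * Jint d := by
    rw [MeasureTheory.integral_congr_ae (Filter.Eventually.of_forall (fun s => h4 s))]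
    exact MeasureTheory.integral_const_mul _ _
  rw [h1, h2, h3, h5]
  have hstep : d - 1 + 1 = d := Nat.succ_pred_eq_of_pos hd
  have hpow : ((d : ℝ) + 1) ^ (d - 1) * ((d : ℝ) + 1) = ((d : ℝ) + 1) ^ d := by
    rw [← pow_succ, hstep]
  have hdd : Real.sqrt (d : ℝ) * Real.sqrt (d : ℝ) = (d : ℝ) := Real.mul_self_sqrt hd0.le
  have hexp1 : Real.exp (1 + (d : ℝ)) * Real.exp (-1 - (d : ℝ)) = 1 := by
    rw [← Real.exp_add, show (1 : ℝ) + (d : ℝ) + (-1 - (d : ℝ)) = 0 by ring, Real.exp_zero]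
  have hpowne : ((d : ℝ) + 1) ^ (d - 1) ≠ 0 := pow_ne_zero _ hd1.ne'
  rw [hc, ← hpow]
  field_simp
  ring_nf
  linear_combination (d : ℝ) * Jint d * hexp1 - Jint d * hs2

lemma pCrit_eq (d : ℕ) (hd : 1 ≤ d) :
    pCrit d * Real.sqrt (π * (d : ℝ) / 2) = Real.sqrt (π / 2) / Jint d := by
  have hd0 : (0 : ℝ) ≤ d := Nat.cast_nonneg d
  have hs : 0 < Real.sqrt d := Real.sqrt_pos.2 (by exact_mod_cast hd)
  have hsplit : Real.sqrt (π * (d : ℝ) / 2) = Real.sqrt d * Real.sqrt (π / 2) := by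
    rw [show π * (d : ℝ) / 2 = (d : ℝ) * (π / 2) by ring, Real.sqrt_mul hd0]
  unfold pCrit
  rw [key_identity d hd, hsplit, mul_inv]
  calc (Real.sqrt d)⁻¹ * (Jint d)⁻¹ * (Real.sqrt d * Real.sqrt (π / 2)) =
      ((Real.sqrt d)⁻¹ * Real.sqrt d) * ((Jint d)⁻¹ * Real.sqrt (π / 2)) := by ring
    _ = (Jint d)⁻¹ * Real.sqrt (π / 2) := by rw [inv_mul_cancel₀ hs.ne', one_mul]
    _ = Real.sqrt (π / 2) / Jint d := by rw [div_eq_mul_inv]; ring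

end PCritAux

theorem pCrit_asymptotic :
    Tendsto (fun d : ℕ => pCrit d * Real.sqrt (Real.pi * (d : ℝ) / 2)) atTop (nhds 1) := by
  have hne : Real.sqrt (π / 2) ≠ 0 := by positivity
  have hJ := PCritAux.Jint_tendsto
  have hmain : Tendsto (fun d : ℕ => Real.sqrt (π / 2) / PCritAux.Jint d) atTop (𝓝 1) := by
    have h := (tendsto_const_nhds (x := Real.sqrt (π / 2))).div hJ hne
    rw [div_self hne] at h
    exact h
  apply hmain.congr'
  filter_upwards [eventually_ge_atTop 1] with d hd
  exact (PCritAux.pCrit_eq d hd).symm
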